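/- arXiv:1406.7083 — 2 statements merged into one kernel-verified Lean document; each statement's English description precedes it below -/
import Mathlib

section
/- The real Jacobian determinant of the involutive automorphism φ_a of the unit ball 𝔹 ⊂ ℂⁿ ≅ ℝ^{2n} at the point w equals ((1-|a|²)/|1-⟨a,w⟩|²)^{n+1}. -/
open MeasureTheory Metric Finset
noncomputable section
abbrev En (n : ℕ) := EuclideanSpace ℂ (Fin n)
instance (n : ℕ) : MeasurableSpace (En n) := borel _
instance (n : ℕ) : BorelSpace (En n) := ⟨rfl⟩
def ip {n : ℕ} (z w : En n) : ℂ := ∑ i, z i * (starRingEnd ℂ) (w i)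
/-- Lebesgue measure normalized so that the unit ball has volume 1. -/
def nvol (n : ℕ) : Measure (En n) :=
  (Measure.addHaar (ball (0 : En n) 1))⁻¹ • Measure.addHaar
def wvol (n : ℕ) (α : ℝ) : Measure (En n) :=
  ((nvol n).restrict (ball 0 1)).withDensity
    (fun z => ENNReal.ofReal ((Real.Gamma (n + α + 1) / (n.factorial * Real.Gamma (α + 1))) * (1 - ‖z‖ ^ 2) ^ α))
def pdi {n : ℕ} (i : Fin n) (f : En n → ℂ) (z : En n) : ℂ :=
  fderiv ℂ f z (EuclideanSpace.single i 1)
def mpd {n : ℕ} (m : Fin n → ℕ) (f : En n → ℂ) : En n → ℂ :=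
  Fin.foldr n (fun i g => (pdi i)^[m i] g) f
def Pα (n : ℕ) (α : ℝ) (g : En n → ℂ) (z : En n) : ℂ :=
  ∫ w, g w / (1 - ip z w) ^ ((n : ℂ) + 1 + α) ∂(wvol n α)
def phi {n : ℕ} (a w : En n) : En n :=
  (1 - ip w a)⁻¹ • ((a - (ip w a / (‖a‖ ^ 2 : ℂ)) • a) -
    ((Real.sqrt (1 - ‖a‖ ^ 2) : ℂ)) • (w - (ip w a / (‖a‖ ^ 2 : ℂ)) • a))

/-! ### Auxiliary lemmas -/

lemma ip_eq_inner' {n : ℕ} (a v : En n) : (inner ℂ a v : ℂ) = ip v a := by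
  simp [ip, PiLp.inner_apply, RCLike.inner_apply, mul_comm]

lemma ip_conj' {n : ℕ} (a w : En n) : ip a w = (starRingEnd ℂ) (inner ℂ a w : ℂ) := by
  simp [ip, PiLp.inner_apply, RCLike.inner_apply, map_sum, mul_comm]

lemma phi_formula' {n : ℕ} (a : En n) (ha0 : a ≠ 0) (v : En n) :
    phi a v = ((1 - ((1 - (Real.sqrt (1 - ‖a‖ ^ 2) : ℂ)) / (‖a‖ ^ 2 : ℂ)) * (inner ℂ a v : ℂ))
        * (1 - (inner ℂ a v : ℂ))⁻¹) • a
      + ((-(Real.sqrt (1 - ‖a‖ ^ 2) : ℂ)) * (1 - (inner ℂ a v : ℂ))⁻¹) • v := by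
  have hA : (‖a‖ ^ 2 : ℂ) ≠ 0 := by
    simp only [ne_eq, pow_eq_zero_iff, Complex.ofReal_eq_zero, norm_eq_zero]
    exact fun h => ha0 (by simpa using h)
  rw [phi, ip_eq_inner' a v]
  match_scalars
  · field_simp
    ring
  · ring

lemma det_lsmul' (n : ℕ) (α : ℂ) :
    LinearMap.det ((LinearMap.lsmul ℂ (En n) α).restrictScalars ℝ) = Complex.normSq α ^ n := by
  classical
  let bC : Module.Basis (Fin n) ℂ (En n) := (EuclideanSpace.basisFun (Fin n) ℂ).toBasis
  let bR : Module.Basis (Fin 2 × Fin n) ℝ (En n) := Complex.basisOneI.smulTower bC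
  rw [← LinearMap.det_toMatrix bR]
  have hmat : LinearMap.toMatrix bR bR ((LinearMap.lsmul ℂ (En n) α).restrictScalars ℝ)
      = Matrix.blockDiagonal (fun _ : Fin n => Algebra.leftMulMatrix Complex.basisOneI α) := by
    ext ⟨k, i⟩ ⟨k', i'⟩
    rw [LinearMap.toMatrix_apply, Module.Basis.smulTower_apply, Matrix.blockDiagonal_apply,
      Algebra.leftMulMatrix_eq_repr_mul]
    have h1 : ((LinearMap.lsmul ℂ (En n) α).restrictScalars ℝ)
        (Complex.basisOneI k' • bC i') = (α * Complex.basisOneI k') • bC i' := by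
      simp [smul_smul, mul_comm]
    rw [h1, Module.Basis.smulTower_repr]
    have h2 : (bC.repr ((α * Complex.basisOneI k') • bC i')) i'
        = α * Complex.basisOneI k' := by
      rw [_root_.map_smul, Module.Basis.repr_self, Finsupp.smul_apply, Finsupp.single_apply]
      simp
    by_cases h : i = i'
    · subst h
      rw [h2, if_pos rfl]
    · have h3 : (bC.repr ((α * Complex.basisOneI k') • bC i')) i = 0 := by
        rw [_root_.map_smul, Module.Basis.repr_self, Finsupp.smul_apply, Finsupp.single_apply,
          if_neg (Ne.symm h)]
        simp
      rw [h3, if_neg h]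
      simp
  rw [hmat, Matrix.det_blockDiagonal]
  simp [← Algebra.norm_eq_matrix_det, Algebra.norm_complex_apply]

lemma det_one_add_rk1' (n : ℕ) (aa u : En n) :
    LinearMap.det ((LinearMap.id : En n →ₗ[ℝ] En n) +
      (LinearMap.toSpanSingleton ℂ (En n) u).restrictScalars ℝ ∘ₗ
      ((innerSL ℂ aa).toLinearMap.restrictScalars ℝ)) =
    Complex.normSq (1 + (inner ℂ aa u : ℂ)) := by
  classical
  let bC : Module.Basis (Fin n) ℂ (En n) := (EuclideanSpace.basisFun (Fin n) ℂ).toBasis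
  let bR : Module.Basis (Fin 2 × Fin n) ℝ (En n) := Complex.basisOneI.smulTower bC
  let b1 : Module.Basis (Fin 2) ℝ ℂ := Complex.basisOneI
  set J : ℂ →ₗ[ℝ] En n := (LinearMap.toSpanSingleton ℂ (En n) u).restrictScalars ℝ with hJ
  set K : En n →ₗ[ℝ] ℂ := ((innerSL ℂ aa).toLinearMap.restrictScalars ℝ) with hK
  have key : (LinearMap.id : ℂ →ₗ[ℝ] ℂ) + K ∘ₗ J
      = Algebra.lmul ℝ ℂ (1 + (inner ℂ aa u : ℂ)) := by
    apply LinearMap.ext; intro z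
    simp only [LinearMap.add_apply, LinearMap.id_apply, LinearMap.comp_apply, hJ, hK,
      LinearMap.coe_restrictScalars, LinearMap.toSpanSingleton_apply,
      ContinuousLinearMap.coe_coe, innerSL_apply_apply]
    rw [inner_smul_right, show ((Algebra.lmul ℝ ℂ) (1 + (inner ℂ aa u : ℂ))) z
      = (1 + (inner ℂ aa u : ℂ)) * z from rfl]
    ring
  rw [← LinearMap.det_toMatrix bR, map_add, LinearMap.toMatrix_id,
    LinearMap.toMatrix_comp bR b1 bR, Matrix.det_one_add_mul_comm,
    ← LinearMap.toMatrix_comp b1 bR b1, ← LinearMap.toMatrix_id (R := ℝ) b1,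
    ← map_add, key, LinearMap.det_toMatrix]
  rw [← Algebra.norm_complex_apply]
  rfl

lemma coeff1' (x y S A : ℂ) (hA : A ≠ 0) (hy : (1:ℂ) - y ≠ 0) :
    ((1 - (1 - S) / A * y) * -((1 - y) ^ 2)⁻¹ * (0 - x) +
        (1 - y)⁻¹ * (0 - (1 - S) / A * x)) * 1 =
    x * ((1 - (1 - S) / A) * ((1 - y) ^ 2)⁻¹) * 1 := by
  field_simp
  ring

lemma key' (z S A : ℂ) (hS : S ≠ 0) (hz : (1:ℂ) - z ≠ 0) (hA : A = 1 - S ^ 2)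
    (hA0 : A ≠ 0) :
    (1:ℂ) + (-S * ((1:ℂ) - z)⁻¹)⁻¹ *
      ((1 - (1 - S) / A) * (((1:ℂ) - z) ^ 2)⁻¹ * A + -S * (((1:ℂ) - z) ^ 2)⁻¹ * z)
      = S * ((1:ℂ) - z)⁻¹ := by
  have halpha : -S * ((1:ℂ) - z)⁻¹ ≠ 0 := mul_ne_zero (neg_ne_zero.mpr hS) (inv_ne_zero hz)
  apply mul_left_cancel₀ halpha
  rw [mul_add, mul_one, ← mul_assoc, mul_inv_cancel₀ halpha, one_mul]
  subst hA
  simp only [← inv_pow]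
  have ht : ((1:ℂ) - z) * (1 - z)⁻¹ = 1 := mul_inv_cancel₀ hz
  have hd : ((1:ℂ) - S ^ 2) * (1 - S ^ 2)⁻¹ = 1 := mul_inv_cancel₀ hA0
  linear_combination (S * (1 - z)⁻¹) * ht - ((1 - S) * ((1 - z)⁻¹) ^ 2) * hd

lemma det_aux' (n : ℕ) (α : ℂ) (hα : α ≠ 0) (aa u : En n) :
    LinearMap.det ((LinearMap.lsmul ℂ (En n) α).restrictScalars ℝ +
      (LinearMap.toSpanSingleton ℂ (En n) u).restrictScalars ℝ ∘ₗ
      ((innerSL ℂ aa).toLinearMap.restrictScalars ℝ)) =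
    Complex.normSq α ^ n * Complex.normSq (1 + α⁻¹ * (inner ℂ aa u : ℂ)) := by
  have factor : (LinearMap.lsmul ℂ (En n) α).restrictScalars ℝ +
      (LinearMap.toSpanSingleton ℂ (En n) u).restrictScalars ℝ ∘ₗ
      ((innerSL ℂ aa).toLinearMap.restrictScalars ℝ)
      = (LinearMap.lsmul ℂ (En n) α).restrictScalars ℝ ∘ₗ
        ((LinearMap.id : En n →ₗ[ℝ] En n) +
        (LinearMap.toSpanSingleton ℂ (En n) (α⁻¹ • u)).restrictScalars ℝ ∘ₗ
        ((innerSL ℂ aa).toLinearMap.restrictScalars ℝ)) := by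
    apply LinearMap.ext; intro h
    simp only [LinearMap.add_apply, LinearMap.comp_apply, LinearMap.coe_restrictScalars,
      LinearMap.lsmul_apply, LinearMap.toSpanSingleton_apply, LinearMap.id_apply,
      ContinuousLinearMap.coe_coe, innerSL_apply_apply, smul_add, smul_smul]
    match_scalars
    · ring
    · field_simp
  rw [factor, LinearMap.det_comp, det_lsmul', det_one_add_rk1', inner_smul_right]

theorem stmt6 (n : ℕ) (a w : En n) (ha : a ∈ ball (0 : En n) 1) (ha0 : a ≠ 0)
    (hw : w ∈ ball (0 : En n) 1) :
    LinearMap.det ((fderiv ℝ (phi a) w).toLinearMap) =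
      ((1 - ‖a‖ ^ 2) / ‖1 - ip a w‖ ^ 2) ^ (n + 1) := by
  classical
  have haN : ‖a‖ < 1 := by simpa using ha
  have hwN : ‖w‖ < 1 := by simpa using hw
  have h1a : (0:ℝ) < 1 - ‖a‖ ^ 2 := by nlinarith [norm_nonneg a]
  have hs2 : (Real.sqrt (1 - ‖a‖ ^ 2)) ^ 2 = 1 - ‖a‖ ^ 2 := Real.sq_sqrt h1a.le
  have hs_pos : (0:ℝ) < Real.sqrt (1 - ‖a‖ ^ 2) := Real.sqrt_pos.mpr h1a
  have hsC : ((Real.sqrt (1 - ‖a‖ ^ 2) : ℝ) : ℂ) ≠ 0 := by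
    exact_mod_cast hs_pos.ne'
  have hAne : (‖a‖ ^ 2 : ℂ) ≠ 0 := by
    simp only [ne_eq, pow_eq_zero_iff, Complex.ofReal_eq_zero, norm_eq_zero]
    exact fun h => ha0 (by simpa using h)
  have hlam_lt : ‖(inner ℂ a w : ℂ)‖ < 1 := by
    have h1 : ‖(inner ℂ a w : ℂ)‖ ≤ ‖a‖ * ‖w‖ := norm_inner_le_norm a w
    have h2 : ‖a‖ * ‖w‖ < 1 := by nlinarith [norm_nonneg a, norm_nonneg w]
    calc ‖(inner ℂ a w : ℂ)‖ = ‖(inner ℂ a w : ℂ)‖ := rfl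
    _ ≤ ‖a‖ * ‖w‖ := h1
    _ < 1 := h2
  have hne : (1:ℂ) - (inner ℂ a w : ℂ) ≠ 0 := by
    intro h
    have h2 : (inner ℂ a w : ℂ) = 1 := by linear_combination -h
    rw [h2] at hlam_lt
    simp at hlam_lt
  -- derivative
  have hB : HasFDerivAt (fun v : En n => (inner ℂ a v : ℂ)) (innerSL ℂ a) w :=
    (innerSL ℂ a).hasFDerivAt
  have h1 : HasFDerivAt (fun v : En n => (1:ℂ) - (inner ℂ a v : ℂ)) (0 - innerSL ℂ a) w :=
    (hasFDerivAt_const (1:ℂ) w).sub hB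
  have hinv : HasFDerivAt (fun v : En n => ((1:ℂ) - (inner ℂ a v : ℂ))⁻¹)
      ((-(((1:ℂ) - (inner ℂ a w : ℂ)) ^ 2)⁻¹) • (0 - innerSL ℂ a)) w := by
    exact (hasDerivAt_inv hne).comp_hasFDerivAt w h1
  have hp1 : HasFDerivAt
      (fun v : En n => (1:ℂ) - ((1 - (Real.sqrt (1 - ‖a‖ ^ 2) : ℂ)) / (‖a‖ ^ 2 : ℂ)) * (inner ℂ a v : ℂ))
      (0 - ((1 - (Real.sqrt (1 - ‖a‖ ^ 2) : ℂ)) / (‖a‖ ^ 2 : ℂ)) • (innerSL ℂ a : En n →L[ℂ] ℂ)) w :=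
    (hasFDerivAt_const (1:ℂ) w).sub (hB.const_mul _)
  have hp := hp1.mul hinv
  have hterm1 := hp.smul (hasFDerivAt_const a w)
  have hg := hinv.const_mul (-(Real.sqrt (1 - ‖a‖ ^ 2) : ℂ))
  have hterm2 := hg.smul (hasFDerivAt_id w)
  have hsum := hterm1.add hterm2
  have hphi := hsum.congr_of_eventuallyEq
    (Filter.Eventually.of_forall (fun v => phi_formula' a ha0 v))
  have hfd := ((hphi.restrictScalars ℝ).fderiv)
  have hα : (-(Real.sqrt (1 - ‖a‖ ^ 2) : ℂ) * ((1:ℂ) - (inner ℂ a w : ℂ))⁻¹) ≠ 0 :=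
    mul_ne_zero (neg_ne_zero.mpr hsC) (inv_ne_zero hne)
  have heq : (fderiv ℝ (phi a) w).toLinearMap
      = (LinearMap.lsmul ℂ (En n)
          (-(Real.sqrt (1 - ‖a‖ ^ 2) : ℂ) * ((1:ℂ) - (inner ℂ a w : ℂ))⁻¹)).restrictScalars ℝ +
        (LinearMap.toSpanSingleton ℂ (En n)
          (((1 - (1 - (Real.sqrt (1 - ‖a‖ ^ 2) : ℂ)) / (‖a‖ ^ 2 : ℂ))
              * ((((1:ℂ) - (inner ℂ a w : ℂ))) ^ 2)⁻¹) • a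
            + ((-(Real.sqrt (1 - ‖a‖ ^ 2) : ℂ)) * ((((1:ℂ) - (inner ℂ a w : ℂ))) ^ 2)⁻¹) • w)).restrictScalars ℝ ∘ₗ
        ((innerSL ℂ a).toLinearMap.restrictScalars ℝ) := by
    rw [hfd]
    apply LinearMap.ext; intro h
    simp only [ContinuousLinearMap.coe_restrictScalars', ContinuousLinearMap.coe_coe,
      ContinuousLinearMap.add_apply, ContinuousLinearMap.smul_apply,
      ContinuousLinearMap.smulRight_apply, ContinuousLinearMap.coe_smul',
      ContinuousLinearMap.id_apply, ContinuousLinearMap.zero_apply,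
      ContinuousLinearMap.coe_sub', Pi.sub_apply, Pi.smul_apply,
      LinearMap.add_apply, LinearMap.comp_apply, LinearMap.coe_restrictScalars,
      LinearMap.lsmul_apply, LinearMap.toSpanSingleton_apply, innerSL_apply_apply, id_eq,
      smul_add, smul_smul, smul_eq_mul]
    match_scalars
    · exact coeff1' (inner ℂ a h) (inner ℂ a w) _ _ hAne hne
    · ring
    · ring
  rw [heq, det_aux' n _ hα a _]
  -- final arithmetic
  have hips : (inner ℂ a a : ℂ) = ((‖a‖ : ℝ) : ℂ) ^ 2 := by
    rw [inner_self_eq_norm_sq_to_K]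
    norm_cast
  rw [inner_add_right, inner_smul_right, inner_smul_right, hips]
  have habs : ‖1 - ip a w‖ ^ 2 = Complex.normSq (1 - (inner ℂ a w : ℂ)) := by
    rw [ip_conj' a w, Complex.sq_norm]
    have h3 : (1:ℂ) - (starRingEnd ℂ) (inner ℂ a w : ℂ)
        = (starRingEnd ℂ) (1 - (inner ℂ a w : ℂ)) := by
      rw [map_sub, map_one]
    rw [h3, Complex.normSq_conj]
  rw [habs]
  have hA_eq : ((‖a‖ : ℂ)) ^ 2 = 1 - ((Real.sqrt (1 - ‖a‖ ^ 2) : ℝ) : ℂ) ^ 2 := by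
    rw [show ((Real.sqrt (1 - ‖a‖ ^ 2) : ℝ) : ℂ) ^ 2
        = (((Real.sqrt (1 - ‖a‖ ^ 2)) ^ 2 : ℝ) : ℂ) by push_cast; ring, hs2]
    push_cast
    ring
  have h1S2 : (1:ℂ) - ((Real.sqrt (1 - ‖a‖ ^ 2) : ℝ) : ℂ) ^ 2 ≠ 0 := by
    rw [← hA_eq]
    exact hAne
  have key : (1:ℂ) + (-(Real.sqrt (1 - ‖a‖ ^ 2) : ℂ) * ((1:ℂ) - (inner ℂ a w : ℂ))⁻¹)⁻¹ *
      (((1 - (1 - (Real.sqrt (1 - ‖a‖ ^ 2) : ℂ)) / (‖a‖ ^ 2 : ℂ))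
          * ((((1:ℂ) - (inner ℂ a w : ℂ))) ^ 2)⁻¹) * (‖a‖ : ℂ) ^ 2
        + ((-(Real.sqrt (1 - ‖a‖ ^ 2) : ℂ)) * ((((1:ℂ) - (inner ℂ a w : ℂ))) ^ 2)⁻¹) * (inner ℂ a w : ℂ))
      = (Real.sqrt (1 - ‖a‖ ^ 2) : ℂ) * ((1:ℂ) - (inner ℂ a w : ℂ))⁻¹ :=
    key' (inner ℂ a w) _ _ hsC hne hA_eq hAne
  rw [key]
  have hnegn : Complex.normSq (-(Real.sqrt (1 - ‖a‖ ^ 2) : ℂ) * ((1:ℂ) - (inner ℂ a w : ℂ))⁻¹)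
      = Complex.normSq ((Real.sqrt (1 - ‖a‖ ^ 2) : ℂ) * ((1:ℂ) - (inner ℂ a w : ℂ))⁻¹) := by
    rw [show -(Real.sqrt (1 - ‖a‖ ^ 2) : ℂ) * ((1:ℂ) - (inner ℂ a w : ℂ))⁻¹
        = -((Real.sqrt (1 - ‖a‖ ^ 2) : ℂ) * ((1:ℂ) - (inner ℂ a w : ℂ))⁻¹) by ring,
      Complex.normSq_neg]
  rw [hnegn, ← pow_succ]
  congr 1
  rw [Complex.normSq_mul, map_inv₀, Complex.normSq_ofReal, Real.mul_self_sqrt h1a.le,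
    div_eq_mul_inv]
end
end

section
/- For Re(c-a-b) > 0 the Gauss hypergeometric series at 1 satisfies ₂F₁(a,b;c;1) = Γ(c)Γ(c-a-b)/(Γ(c-a)Γ(c-b)). -/
open MeasureTheory Metric Finset
noncomputable section
namespace Gauss
open Filter Topology

def t (a b c : ℂ) (k : ℕ) : ℂ :=
  ((ascPochhammer ℂ k).eval a * (ascPochhammer ℂ k).eval b) /
    (k.factorial * (ascPochhammer ℂ k).eval c)

lemma poch_prod (x : ℂ) (n : ℕ) :
    (ascPochhammer ℂ n).eval x = ∏ j ∈ range n, (x + j) := by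
  induction n with
  | zero => simp
  | succ n ih => rw [ascPochhammer_succ_eval, ih, prod_range_succ]

lemma poch_ne_zero {x : ℂ} (hx : ∀ k : ℕ, x ≠ -(k : ℂ)) (n : ℕ) :
    (ascPochhammer ℂ n).eval x ≠ 0 := by
  rw [poch_prod]
  refine prod_ne_zero_iff.mpr fun j _ hj => hx j ?_
  linear_combination hj

lemma poch_shift (x : ℂ) (n : ℕ) :
    x * (ascPochhammer ℂ n).eval (x + 1) = (ascPochhammer ℂ n).eval x * (x + n) := by
  rw [← ascPochhammer_succ_eval, ascPochhammer_succ_left]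
  simp [Polynomial.eval_comp]

lemma Gs_eq (s : ℂ) (n : ℕ) :
    Complex.GammaSeq s n = (n : ℂ) ^ s * n.factorial / (ascPochhammer ℂ (n+1)).eval s := by
  rw [Complex.GammaSeq, poch_prod]

lemma Gs_ne_zero {s : ℂ} {n : ℕ} (hn : n ≠ 0) (hs : (ascPochhammer ℂ (n+1)).eval s ≠ 0) :
    Complex.GammaSeq s n ≠ 0 := by
  rw [Gs_eq]
  apply div_ne_zero _ hs
  apply mul_ne_zero
  · simp [Complex.cpow_eq_zero_iff, Nat.cast_ne_zero, hn]
  · exact_mod_cast Nat.cast_ne_zero.mpr n.factorial_ne_zero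

lemma poch_eq_Gs {s : ℂ} {n : ℕ} (hn : n ≠ 0) (hs : (ascPochhammer ℂ (n+1)).eval s ≠ 0) :
    (ascPochhammer ℂ (n+1)).eval s = (n : ℂ) ^ s * n.factorial / Complex.GammaSeq s n := by
  have h1 : (n:ℂ) ^ s * n.factorial ≠ 0 := by
    apply mul_ne_zero
    · simp [Complex.cpow_eq_zero_iff, Nat.cast_ne_zero, hn]
    · exact_mod_cast Nat.cast_ne_zero.mpr n.factorial_ne_zero
  rw [Gs_eq]
  field_simp
  exact (div_self h1).symm

/-- the key asymptotic expression for the term -/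
lemma t_eq_Gs {a b c : ℂ} {n : ℕ} (hn : n ≠ 0)
    (ha : (ascPochhammer ℂ (n+1)).eval a ≠ 0)
    (hb : (ascPochhammer ℂ (n+1)).eval b ≠ 0)
    (hc : (ascPochhammer ℂ (n+1)).eval c ≠ 0) :
    t a b c (n+1) = (n : ℂ) ^ (a + b - c) * Complex.GammaSeq c n /
      ((((n:ℂ)+1) * Complex.GammaSeq a n * Complex.GammaSeq b n)) := by
  have hn0 : (n:ℂ) ≠ 0 := Nat.cast_ne_zero.mpr hn
  have hGa := Gs_ne_zero hn ha
  have hGb := Gs_ne_zero hn hb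
  have hGc := Gs_ne_zero hn hc
  have hfac : ((n+1).factorial : ℂ) = ((n:ℂ)+1) * n.factorial := by
    rw [Nat.factorial_succ]; push_cast; ring
  have hf0 : (n.factorial : ℂ) ≠ 0 := Nat.cast_ne_zero.mpr n.factorial_ne_zero
  rw [t, hfac, poch_eq_Gs hn ha, poch_eq_Gs hn hb, poch_eq_Gs hn hc,
    Complex.cpow_sub _ _ hn0, Complex.cpow_add _ _ hn0]
  have hn1 : ((n:ℂ)+1) ≠ 0 := by
    have : ((n:ℂ)+1) = ((n+1 : ℕ) : ℂ) := by push_cast; ring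
    rw [this]; exact_mod_cast Nat.succ_ne_zero n
  have hpa : (n:ℂ) ^ a ≠ 0 := by simp [Complex.cpow_eq_zero_iff, hn0]
  have hpb : (n:ℂ) ^ b ≠ 0 := by simp [Complex.cpow_eq_zero_iff, hn0]
  have hpc : (n:ℂ) ^ c ≠ 0 := by simp [Complex.cpow_eq_zero_iff, hn0]
  field_simp


lemma ratio_tendsto (a b c : ℂ) (h0 : Complex.Gamma a * Complex.Gamma b ≠ 0) :
    Tendsto (fun n => Complex.GammaSeq c n / (Complex.GammaSeq a n * Complex.GammaSeq b n))
      atTop (𝓝 (Complex.Gamma c / (Complex.Gamma a * Complex.Gamma b))) :=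
  (Complex.GammaSeq_tendsto_Gamma c).div
    ((Complex.GammaSeq_tendsto_Gamma a).mul (Complex.GammaSeq_tendsto_Gamma b)) h0

lemma cpow_nat_tendsto_zero {z : ℂ} (hz : z.re < 0) :
    Tendsto (fun n : ℕ => (n:ℂ)^z) atTop (𝓝 0) := by
  rw [tendsto_zero_iff_norm_tendsto_zero]
  have h1 : Tendsto (fun n : ℕ => (n:ℝ)^z.re) atTop (𝓝 0) := by
    have := (tendsto_rpow_neg_atTop (show 0 < -z.re by linarith)).comp
      tendsto_natCast_atTop_atTop (α := ℕ)
    simpa [Function.comp_def] using this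
  refine Tendsto.congr' ?_ h1
  filter_upwards [eventually_ge_atTop 1] with n hn
  have hn0 : (0:ℝ) < (n:ℝ) := by exact_mod_cast Nat.pos_of_ne_zero (by omega)
  rw [show ((n:ℂ)) = (((n:ℝ)):ℂ) by norm_cast,
    Complex.norm_cpow_eq_rpow_re_of_pos hn0]

lemma t_succ_eventually {a b c : ℂ} (ha : ∀ k : ℕ, a ≠ -(k:ℂ)) (hb : ∀ k : ℕ, b ≠ -(k:ℂ))
    (hcc : ∀ k : ℕ, c ≠ -(k:ℂ)) :
    ∀ᶠ n : ℕ in atTop, t a b c (n+1) = (n:ℂ)^(a+b-c) *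
      (Complex.GammaSeq c n / (Complex.GammaSeq a n * Complex.GammaSeq b n)) * ((n:ℂ)+1)⁻¹ := by
  filter_upwards [eventually_ge_atTop 1] with n hn
  have hn' : n ≠ 0 := by omega
  have hGa := Gs_ne_zero hn' (poch_ne_zero ha _)
  have hGb := Gs_ne_zero hn' (poch_ne_zero hb _)
  have hn1' : ((n:ℂ)+1) ≠ 0 := by
    have : ((n:ℂ)+1) = ((n+1 : ℕ) : ℂ) := by push_cast; ring
    rw [this]; exact_mod_cast Nat.succ_ne_zero n
  rw [t_eq_Gs hn' (poch_ne_zero ha _) (poch_ne_zero hb _) (poch_ne_zero hcc _)]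
  field_simp
  try ring
  try tauto

/-- in case B, `k * t k → 0` -/
lemma beta_tendsto {a b c : ℂ} (ha : ∀ k : ℕ, a ≠ -(k:ℂ)) (hb : ∀ k : ℕ, b ≠ -(k:ℂ))
    (hcc : ∀ k : ℕ, c ≠ -(k:ℂ)) (h : 0 < (c - a - b).re) :
    Tendsto (fun k : ℕ => (k:ℂ) * t a b c k) atTop (𝓝 0) := by
  rw [← Filter.tendsto_add_atTop_iff_nat 1]
  have h2 : Tendsto (fun n : ℕ => (n:ℂ)^(a+b-c) *
      (Complex.GammaSeq c n / (Complex.GammaSeq a n * Complex.GammaSeq b n))) atTop (𝓝 0) := by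
    have hre : (a+b-c).re < 0 := by
      have := h; simp only [Complex.sub_re, Complex.add_re] at this ⊢; linarith
    have := (cpow_nat_tendsto_zero hre).mul (ratio_tendsto a b c
      (mul_ne_zero (Complex.Gamma_ne_zero ha) (Complex.Gamma_ne_zero hb)))
    simpa using this
  refine Tendsto.congr' ?_ h2
  filter_upwards [t_succ_eventually ha hb hcc, eventually_ge_atTop 1] with n hn hn1
  have hn1' : ((n:ℂ)+1) ≠ 0 := by
    have : ((n:ℂ)+1) = ((n+1 : ℕ) : ℂ) := by push_cast; ring
    rw [this]; exact_mod_cast Nat.succ_ne_zero n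
  rw [hn]
  have hGa := Gs_ne_zero (show n ≠ 0 by omega) (poch_ne_zero ha (n+1))
  have hGb := Gs_ne_zero (show n ≠ 0 by omega) (poch_ne_zero hb (n+1))
  push_cast
  field_simp


lemma summable_norm_t {a b c : ℂ} (ha : ∀ k : ℕ, a ≠ -(k:ℂ)) (hb : ∀ k : ℕ, b ≠ -(k:ℂ))
    (hcc : ∀ k : ℕ, c ≠ -(k:ℂ)) (h : 0 < (c - a - b).re) :
    Summable (fun k : ℕ => ‖t a b c k‖) := by
  set ε := (c - a - b).re with hε
  rw [← summable_nat_add_iff 1]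
  set C := ‖Complex.Gamma c / (Complex.Gamma a * Complex.Gamma b)‖ + 1 with hC
  have hg : Summable (fun n : ℕ => C * (n:ℝ)^(-1-ε)) :=
    (Real.summable_nat_rpow.mpr (by linarith)).mul_left C
  apply Summable.of_norm_bounded_eventually_nat hg
  have hrt := (ratio_tendsto a b c
      (mul_ne_zero (Complex.Gamma_ne_zero ha) (Complex.Gamma_ne_zero hb))).norm
  filter_upwards [t_succ_eventually ha hb hcc, hrt.eventually_lt_const (lt_add_one _),
    eventually_ge_atTop 1] with n h2 h1 hn1
  have hn0 : (0:ℝ) < (n:ℝ) := by exact_mod_cast Nat.pos_of_ne_zero (by omega)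
  have e1 : ‖(n:ℂ)^(a+b-c)‖ = (n:ℝ)^(-ε) := by
    rw [show ((n:ℂ)) = (((n:ℝ)):ℂ) by norm_cast,
      Complex.norm_cpow_eq_rpow_re_of_pos hn0]
    congr 1
    simp [hε, Complex.sub_re, Complex.add_re]
    ring
  have e2 : ‖((n:ℂ)+1)⁻¹‖ ≤ (n:ℝ)^(-1:ℝ) := by
    rw [norm_inv, Real.rpow_neg_one, show ((n:ℂ)+1) = (((n:ℝ)+1 : ℝ):ℂ) by push_cast; ring,
      Complex.norm_real, Real.norm_of_nonneg (by linarith)]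
    rw [inv_le_inv₀ (by linarith) hn0]
    linarith
  rw [norm_norm, h2, norm_mul, norm_mul, e1]
  calc (n:ℝ)^(-ε) * ‖Complex.GammaSeq c n / (Complex.GammaSeq a n * Complex.GammaSeq b n)‖ *
        ‖((n:ℂ)+1)⁻¹‖
      ≤ (n:ℝ)^(-ε) * C * (n:ℝ)^(-1:ℝ) := by
        apply mul_le_mul (mul_le_mul le_rfl h1.le (norm_nonneg _) (Real.rpow_nonneg hn0.le _)) e2
          (norm_nonneg _)
        positivity
    _ = C * (n:ℝ)^(-1-ε) := by
        rw [show (-1-ε : ℝ) = -ε + (-1) by ring, Real.rpow_add hn0]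
        ring


/-- the termwise contiguous relation -/
lemma termwise (a b : ℂ) {c : ℂ} (hcc : ∀ k : ℕ, c ≠ -(k:ℂ)) (hab : c - a - b ≠ 0) (k : ℕ) :
    (c-a)*(c-b)/(c*(c-a-b)) * t a b (c+1) k - t a b c k
      = (((k:ℂ)+1) * t a b c (k+1) - (k:ℂ) * t a b c k)/(c-a-b) := by
  have hc0 : c ≠ 0 := by have := hcc 0; simpa using this
  have hck : c + (k:ℂ) ≠ 0 := by
    intro hx; exact hcc k (by linear_combination hx)
  have hpk : (ascPochhammer ℂ k).eval c ≠ 0 := poch_ne_zero hcc k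
  have hfk : ((k.factorial : ℂ)) ≠ 0 := Nat.cast_ne_zero.mpr k.factorial_ne_zero
  have hk1 : ((k:ℂ)+1) ≠ 0 := by
    have : ((k:ℂ)+1) = ((k+1 : ℕ) : ℂ) := by push_cast; ring
    rw [this]; exact_mod_cast Nat.succ_ne_zero k
  have e1 : t a b (c+1) k = c * ((ascPochhammer ℂ k).eval a * (ascPochhammer ℂ k).eval b) /
      ((k.factorial : ℂ) * ((ascPochhammer ℂ k).eval c * (c + k))) := by
    rw [t]
    have hsh : (ascPochhammer ℂ k).eval (c+1) = (ascPochhammer ℂ k).eval c * (c + k) / c := by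
      rw [eq_div_iff hc0, mul_comm _ c, poch_shift]
    rw [hsh, mul_div_assoc', div_div_eq_mul_div, mul_comm]
  have e2 : t a b c (k+1) = ((ascPochhammer ℂ k).eval a * (a + k)) *
      ((ascPochhammer ℂ k).eval b * (b + k)) /
      ((((k:ℂ)+1) * (k.factorial : ℂ)) * ((ascPochhammer ℂ k).eval c * (c + k))) := by
    rw [t, ascPochhammer_succ_eval, ascPochhammer_succ_eval, ascPochhammer_succ_eval]
    have : (((k+1).factorial : ℂ)) = ((k:ℂ)+1) * (k.factorial : ℂ) := by
      rw [Nat.factorial_succ]; push_cast; ring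
    rw [this]
  have e3 : t a b c k = (ascPochhammer ℂ k).eval a * (ascPochhammer ℂ k).eval b /
      ((k.factorial : ℂ) * (ascPochhammer ℂ k).eval c) := rfl
  rw [e1, e2, e3]
  have hD2 : (k.factorial : ℂ) * (ascPochhammer ℂ k).eval c ≠ 0 := mul_ne_zero hfk hpk
  have hDs : (ascPochhammer ℂ k).eval c * (c + (k:ℂ)) ≠ 0 := mul_ne_zero hpk hck
  have hD1 : (c*(c-a-b)) * ((k.factorial : ℂ) * ((ascPochhammer ℂ k).eval c * (c + (k:ℂ)))) ≠ 0 :=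
    mul_ne_zero (mul_ne_zero hc0 hab) (mul_ne_zero hfk hDs)
  have hD3 : (((k:ℂ)+1) * (k.factorial : ℂ)) * ((ascPochhammer ℂ k).eval c * (c + (k:ℂ))) ≠ 0 :=
    mul_ne_zero (mul_ne_zero hk1 hfk) hDs
  rw [div_mul_div_comm, mul_div_assoc', mul_div_assoc',
      div_sub_div _ _ hD1 hD2, div_sub_div _ _ hD3 hD2, div_div,
      div_eq_div_iff (mul_ne_zero hD1 hD2) (mul_ne_zero (mul_ne_zero hD3 hD2) hab)]
  ring

lemma re_pos_ne (z : ℂ) (h : 0 < z.re) : z ≠ 0 := fun hz => by simp [hz] at h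

/-- one step of the contiguous relation -/
lemma step {a b c : ℂ} (hcc : ∀ k : ℕ, c ≠ -(k:ℂ)) (h : 0 < (c - a - b).re)
    (hs1 : Summable (t a b c)) (hs2 : Summable (t a b (c+1)))
    (hβ : Tendsto (fun k : ℕ => (k:ℂ) * t a b c k) atTop (𝓝 0)) :
    ∑' k, t a b c k = (c-a)*(c-b)/(c*(c-a-b)) * ∑' k, t a b (c+1) k := by
  have hab : c - a - b ≠ 0 := re_pos_ne _ h
  set R := (c-a)*(c-b)/(c*(c-a-b)) with hR
  have h1 : Tendsto (fun n : ℕ => ∑ k ∈ range n, (R * t a b (c+1) k - t a b c k)) atTop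
      (𝓝 (R * ∑' k, t a b (c+1) k - ∑' k, t a b c k)) :=
    (((hs2.hasSum.mul_left R).sub hs1.hasSum)).tendsto_sum_nat
  have h2 : Tendsto (fun n : ℕ => ∑ k ∈ range n, (R * t a b (c+1) k - t a b c k)) atTop
      (𝓝 0) := by
    have heq : ∀ n : ℕ, ∑ k ∈ range n, (R * t a b (c+1) k - t a b c k)
        = (n:ℂ) * t a b c n / (c-a-b) := by
      intro n
      have h0 := Finset.sum_range_sub (fun k : ℕ => (k:ℂ) * t a b c k / (c-a-b)) n
      simp only [Nat.cast_zero, zero_mul, zero_div, sub_zero] at h0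
      rw [← h0]
      refine Finset.sum_congr rfl fun k _ => ?_
      rw [termwise a b hcc hab k]
      push_cast
      rw [sub_div]
    simp_rw [heq]
    simpa using hβ.div_const (c-a-b)
  have h3 := tendsto_nhds_unique h1 h2
  have h4 : R * ∑' k, t a b (c+1) k = ∑' k, t a b c k := by linear_combination h3
  rw [h4]

lemma hcc_shift {c : ℂ} (hcc : ∀ k : ℕ, c ≠ -(k:ℂ)) (j : ℕ) :
    ∀ k : ℕ, c + (j:ℂ) ≠ -(k:ℂ) := fun k hk =>
  hcc (k+j) (by push_cast; linear_combination hk)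

lemma hre_shift {a b c : ℂ} (h : 0 < (c - a - b).re) (j : ℕ) :
    0 < ((c + (j:ℂ)) - a - b).re := by
  simp only [Complex.sub_re, Complex.add_re, Complex.natCast_re]
  have : (0:ℝ) ≤ (j:ℝ) := Nat.cast_nonneg j
  simp only [Complex.sub_re] at h
  linarith

lemma iterate_step {a b c : ℂ} (hcc : ∀ k : ℕ, c ≠ -(k:ℂ)) (h : 0 < (c - a - b).re)
    (H1 : ∀ j : ℕ, Summable (t a b (c + (j:ℂ))))
    (H2 : ∀ j : ℕ, Tendsto (fun k : ℕ => (k:ℂ) * t a b (c + (j:ℂ)) k) atTop (𝓝 0)) (N : ℕ) :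
    ∑' k, t a b c k = (∏ j ∈ range N, ((c+(j:ℂ)-a)*(c+(j:ℂ)-b)/((c+(j:ℂ))*(c+(j:ℂ)-a-b)))) *
      ∑' k, t a b (c + (N:ℂ)) k := by
  induction N with
  | zero => simp
  | succ N ih =>
    have hcast : (c + (N:ℂ)) + 1 = c + ((N+1 : ℕ):ℂ) := by push_cast; ring
    have hstep := step (hcc_shift hcc N) (hre_shift h N) (H1 N)
      (by rw [hcast]; exact H1 (N+1)) (H2 N)
    rw [hcast] at hstep
    rw [ih, prod_range_succ, hstep]
    ring

lemma poch_eval_zero {x : ℂ} {m N : ℕ} (hx : x = -(m:ℂ)) (hN : m < N) :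
    (ascPochhammer ℂ N).eval x = 0 := by
  rw [poch_prod]
  exact Finset.prod_eq_zero (Finset.mem_range.mpr hN) (by rw [hx]; ring)

lemma q_eq {a b c : ℂ} (N : ℕ) :
    (∏ j ∈ range N, ((c+(j:ℂ)-a)*(c+(j:ℂ)-b)/((c+(j:ℂ))*(c+(j:ℂ)-a-b))))
      = (ascPochhammer ℂ N).eval (c-a) * (ascPochhammer ℂ N).eval (c-b) /
        ((ascPochhammer ℂ N).eval c * (ascPochhammer ℂ N).eval (c-a-b)) := by
  rw [Finset.prod_div_distrib, Finset.prod_mul_distrib, Finset.prod_mul_distrib,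
    poch_prod, poch_prod, poch_prod, poch_prod]
  congr 1
  · congr 1 <;> exact Finset.prod_congr rfl fun j _ => by ring
  · congr 1 <;> exact Finset.prod_congr rfl fun j _ => by ring

lemma prod_tendsto {a b c : ℂ} (hcc : ∀ k : ℕ, c ≠ -(k:ℂ)) (h : 0 < (c - a - b).re) :
    Tendsto (fun N : ℕ => ∏ j ∈ range N, ((c+(j:ℂ)-a)*(c+(j:ℂ)-b)/((c+(j:ℂ))*(c+(j:ℂ)-a-b))))
      atTop (𝓝 (Complex.Gamma c * Complex.Gamma (c-a-b) /
        (Complex.Gamma (c-a) * Complex.Gamma (c-b)))) := by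
  simp_rw [q_eq]
  have hcab : ∀ k : ℕ, c - a - b ≠ -(k:ℂ) := by
    intro k hk
    have : (c-a-b).re = -(k:ℝ) := by rw [hk]; simp
    have hk0 : (0:ℝ) ≤ (k:ℝ) := Nat.cast_nonneg k
    linarith [h, this ▸ h]
  by_cases h0 : Complex.Gamma (c-a) * Complex.Gamma (c-b) = 0
  · rw [h0, div_zero]
    -- eventually the product is zero
    rcases mul_eq_zero.mp h0 with hz | hz
    · obtain ⟨m, hm⟩ := (Complex.Gamma_eq_zero_iff _).mp hz
      refine Tendsto.congr' ?_ tendsto_const_nhds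
      filter_upwards [eventually_gt_atTop m] with N hN
      rw [poch_eval_zero hm hN, zero_mul, zero_div]
    · obtain ⟨m, hm⟩ := (Complex.Gamma_eq_zero_iff _).mp hz
      refine Tendsto.congr' ?_ tendsto_const_nhds
      filter_upwards [eventually_gt_atTop m] with N hN
      rw [poch_eval_zero hm hN, mul_zero, zero_div]
  · have hca : ∀ k : ℕ, c - a ≠ -(k:ℂ) := by
      intro k hk
      exact (left_ne_zero_of_mul h0) ((Complex.Gamma_eq_zero_iff _).mpr ⟨k, hk⟩)
    have hcb : ∀ k : ℕ, c - b ≠ -(k:ℂ) := by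
      intro k hk
      exact (right_ne_zero_of_mul h0) ((Complex.Gamma_eq_zero_iff _).mpr ⟨k, hk⟩)
    have key : Tendsto (fun n : ℕ =>
        Complex.GammaSeq c n * Complex.GammaSeq (c-a-b) n /
          (Complex.GammaSeq (c-a) n * Complex.GammaSeq (c-b) n)) atTop
        (𝓝 (Complex.Gamma c * Complex.Gamma (c-a-b) /
          (Complex.Gamma (c-a) * Complex.Gamma (c-b)))) :=
      ((Complex.GammaSeq_tendsto_Gamma c).mul (Complex.GammaSeq_tendsto_Gamma (c-a-b))).div
        (((Complex.GammaSeq_tendsto_Gamma (c-a)).mul (Complex.GammaSeq_tendsto_Gamma (c-b)))) h0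
    refine (tendsto_add_atTop_iff_nat 1).mp (Tendsto.congr' ?_ key)
    filter_upwards [eventually_ge_atTop 1] with n hn
    have hn' : n ≠ 0 := by omega
    have hn0 : (n:ℂ) ≠ 0 := Nat.cast_ne_zero.mpr hn'
    have hf0 : (n.factorial : ℂ) ≠ 0 := Nat.cast_ne_zero.mpr n.factorial_ne_zero
    have hG1 := Gs_ne_zero hn' (poch_ne_zero hca (n+1))
    have hG2 := Gs_ne_zero hn' (poch_ne_zero hcb (n+1))
    have hG3 := Gs_ne_zero hn' (poch_ne_zero hcc (n+1))
    have hG4 := Gs_ne_zero hn' (poch_ne_zero hcab (n+1))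
    rw [poch_eq_Gs hn' (poch_ne_zero hca (n+1)), poch_eq_Gs hn' (poch_ne_zero hcb (n+1)),
      poch_eq_Gs hn' (poch_ne_zero hcc (n+1)), poch_eq_Gs hn' (poch_ne_zero hcab (n+1))]
    simp only [Complex.cpow_sub _ _ hn0]
    have hpa : (n:ℂ) ^ a ≠ 0 := by simp [Complex.cpow_eq_zero_iff, hn0]
    have hpb : (n:ℂ) ^ b ≠ 0 := by simp [Complex.cpow_eq_zero_iff, hn0]
    have hpc : (n:ℂ) ^ c ≠ 0 := by simp [Complex.cpow_eq_zero_iff, hn0]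
    field_simp

lemma t_zero' (a b c : ℂ) : t a b c 0 = 1 := by simp [t]

lemma poch_norm_upper (x : ℂ) (r : ℝ) (hr : ‖x‖ ≤ r) (k : ℕ) :
    ‖(ascPochhammer ℂ k).eval x‖ ≤ ∏ j ∈ range k, (r + (j:ℝ)) := by
  rw [poch_prod, norm_prod]
  refine Finset.prod_le_prod (fun j _ => norm_nonneg _) (fun j _ => ?_)
  calc ‖x + (j:ℂ)‖ ≤ ‖x‖ + ‖((j:ℕ):ℂ)‖ := norm_add_le _ _
    _ ≤ r + (j:ℝ) := by
        rw [show ‖((j:ℕ):ℂ)‖ = (j:ℝ) by rw [Complex.norm_natCast]]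
        linarith

lemma poch_norm_lower (c : ℂ) {N : ℕ} (hN : ‖c‖ ≤ (N:ℝ)) (k : ℕ) :
    ∏ j ∈ range k, ((N:ℝ) - ‖c‖ + (j:ℝ)) ≤ ‖(ascPochhammer ℂ k).eval (c + (N:ℂ))‖ := by
  rw [poch_prod, norm_prod]
  refine Finset.prod_le_prod (fun j _ => by
    have hj : (0:ℝ) ≤ (j:ℝ) := Nat.cast_nonneg j
    linarith) (fun j _ => ?_)
  have h1 : ‖((N:ℂ) + (j:ℂ))‖ ≤ ‖c + (N:ℂ) + (j:ℂ)‖ + ‖c‖ := by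
    calc ‖((N:ℂ) + (j:ℂ))‖ = ‖(c + (N:ℂ) + (j:ℂ)) + (-c)‖ := by ring_nf
      _ ≤ ‖c + (N:ℂ) + (j:ℂ)‖ + ‖(-c)‖ := norm_add_le _ _
      _ = ‖c + (N:ℂ) + (j:ℂ)‖ + ‖c‖ := by rw [norm_neg]
  have h2 : ‖((N:ℂ) + (j:ℂ))‖ = (N:ℝ) + (j:ℝ) := by
    rw [show ((N:ℂ) + (j:ℂ)) = (((N:ℝ) + (j:ℝ) : ℝ) : ℂ) by push_cast; ring,
      Complex.norm_real, Real.norm_of_nonneg (by positivity)]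
  rw [h2] at h1
  linarith

lemma tail_tendsto (a b c : ℂ) :
    Tendsto (fun N : ℕ => ∑' k, t a b (c + (N:ℂ)) k) atTop (𝓝 1) := by
  set M : ℝ := max ‖a‖ ‖b‖ + 1 with hM
  have hM1 : (1:ℝ) ≤ M := by
    rw [hM]
    have h0 : (0:ℝ) ≤ max ‖a‖ ‖b‖ := le_max_iff.mpr (Or.inl (norm_nonneg a))
    linarith
  have hMa : ‖a‖ ≤ M := by rw [hM]; have := le_max_left ‖a‖ ‖b‖; linarith
  have hMb : ‖b‖ ≤ M := by rw [hM]; have := le_max_right ‖a‖ ‖b‖; linarith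
  set D : ℕ := ⌈2*M⌉₊ + 2 with hD
  have hD2 : 2*M + 1 < (D:ℝ) := by
    have h1 := Nat.le_ceil (2*M)
    rw [hD]
    push_cast
    linarith
  set bound : ℕ → ℝ := fun k => ‖t (M:ℂ) (M:ℂ) ((D:ℕ):ℂ) k‖ with hbnd
  have hMne : ∀ k : ℕ, ((M:ℝ):ℂ) ≠ -(k:ℂ) := by
    intro k hk
    have h2 : M = -(k:ℝ) := by exact_mod_cast congrArg Complex.re hk
    have : (0:ℝ) ≤ (k:ℝ) := Nat.cast_nonneg k
    linarith
  have hDne : ∀ k : ℕ, ((D:ℕ):ℂ) ≠ -(k:ℂ) := by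
    intro k hk
    have h2 : (D:ℝ) = -(k:ℝ) := by exact_mod_cast congrArg Complex.re hk
    have : (0:ℝ) ≤ (k:ℝ) := Nat.cast_nonneg k
    linarith
  have hre : 0 < (((D:ℕ):ℂ) - (M:ℝ) - (M:ℝ)).re := by
    simp only [Complex.sub_re, Complex.natCast_re, Complex.ofReal_re]
    linarith
  have hbsum : Summable bound := summable_norm_t hMne hMne hDne hre
  have hbound_eq : ∀ k : ℕ, bound k = (∏ j ∈ range k, (M+(j:ℝ))) * (∏ j ∈ range k, (M+(j:ℝ))) /
      ((k.factorial : ℝ) * ∏ j ∈ range k, ((D:ℝ)+(j:ℝ))) := by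
    intro k
    have cast1 : ∏ j ∈ range k, (((M:ℝ):ℂ)+(j:ℂ)) = ((∏ j ∈ range k, (M+(j:ℝ)) : ℝ) : ℂ) := by
      push_cast; rfl
    have cast2 : ∏ j ∈ range k, (((D:ℕ):ℂ)+(j:ℂ)) = ((∏ j ∈ range k, ((D:ℝ)+(j:ℝ)) : ℝ) : ℂ) := by
      push_cast; rfl
    have hMp : (0:ℝ) ≤ ∏ j ∈ range k, (M+(j:ℝ)) :=
      Finset.prod_nonneg fun j _ => by have : (0:ℝ) ≤ (j:ℝ) := Nat.cast_nonneg j; linarith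
    have hDp : (0:ℝ) ≤ ∏ j ∈ range k, ((D:ℝ)+(j:ℝ)) :=
      Finset.prod_nonneg fun j _ => by have : (0:ℝ) ≤ (j:ℝ) := Nat.cast_nonneg j; linarith
    rw [hbnd]
    simp only [t, poch_prod, cast1, cast2, norm_div, norm_mul, Complex.norm_natCast,
      Complex.norm_real, Real.norm_of_nonneg hMp, Real.norm_of_nonneg hDp]
  -- pointwise limits
  have hpt : ∀ k : ℕ, Tendsto (fun N : ℕ => t a b (c + (N:ℂ)) k) atTop
      (𝓝 (if k = 0 then (1:ℂ) else 0)) := by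
    intro k
    match k with
    | 0 => simp only [t_zero', if_pos rfl]; exact tendsto_const_nhds
    | (k+1) =>
      simp only [if_neg (Nat.succ_ne_zero k)]
      set K : ℝ := ‖(ascPochhammer ℂ (k+1)).eval a‖ * ‖(ascPochhammer ℂ (k+1)).eval b‖ with hK
      have hg : Tendsto (fun N : ℕ => K * ((N:ℝ) - ‖c‖)⁻¹) atTop (𝓝 0) := by
        have h1 : Tendsto (fun N : ℕ => ((N:ℝ) - ‖c‖)) atTop atTop :=
          tendsto_atTop_add_const_right _ _ tendsto_natCast_atTop_atTop
        simpa using (h1.inv_tendsto_atTop).const_mul K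
      refine squeeze_zero_norm' ?_ hg
      filter_upwards [eventually_ge_atTop (⌈‖c‖⌉₊ + 1)] with N hN
      have hcN : ‖c‖ + 1 ≤ (N:ℝ) := by
        have h1 : ‖c‖ ≤ (⌈‖c‖⌉₊ : ℝ) := Nat.le_ceil _
        have h2 : ((⌈‖c‖⌉₊ + 1 : ℕ) : ℝ) ≤ (N:ℝ) := by exact_mod_cast hN
        push_cast at h2
        linarith
      have hx1 : (1:ℝ) ≤ (N:ℝ) - ‖c‖ := by linarith
      have hPlow : (N:ℝ) - ‖c‖ ≤ ‖(ascPochhammer ℂ (k+1)).eval (c + (N:ℂ))‖ := by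
        refine le_trans ?_ (poch_norm_lower c (by linarith) (k+1))
        have h0 : ((N:ℝ) - ‖c‖) ≤ ∏ j ∈ range (k+1), ((N:ℝ) - ‖c‖ + (j:ℝ)) := by
          rw [Finset.prod_range_succ']
          simp only [Nat.cast_zero, add_zero]
          refine le_mul_of_one_le_left (by linarith) ?_
          calc (1:ℝ) = ∏ j ∈ range k, (1:ℝ) := by simp
            _ ≤ ∏ j ∈ range k, ((N:ℝ) - ‖c‖ + ((j+1:ℕ):ℝ)) :=
              Finset.prod_le_prod (fun j _ => zero_le_one) (fun j _ => by
                have hj : (0:ℝ) ≤ (j:ℝ) := Nat.cast_nonneg j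
                push_cast
                linarith)
        exact h0
      have hfac1 : (1:ℝ) ≤ ((k+1).factorial : ℝ) := by exact_mod_cast (k+1).factorial_pos
      rw [t, norm_div, norm_mul, norm_mul, Complex.norm_natCast]
      rw [← div_eq_mul_inv]
      refine div_le_div₀ (by positivity) le_rfl (by linarith) ?_
      calc (N:ℝ) - ‖c‖ = 1 * ((N:ℝ) - ‖c‖) := (one_mul _).symm
        _ ≤ ((k+1).factorial : ℝ) * ‖(ascPochhammer ℂ (k+1)).eval (c + (N:ℂ))‖ := by
            apply mul_le_mul hfac1 hPlow (by linarith) (by linarith)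
  -- eventual domination
  have hdom : ∀ᶠ N : ℕ in atTop, ∀ k : ℕ, ‖t a b (c + (N:ℂ)) k‖ ≤ bound k := by
    filter_upwards [eventually_ge_atTop (⌈‖c‖⌉₊ + D)] with N hN k
    have hcN : ‖c‖ + (D:ℝ) ≤ (N:ℝ) := by
      have h1 : ‖c‖ ≤ (⌈‖c‖⌉₊ : ℝ) := Nat.le_ceil _
      have h2 : ((⌈‖c‖⌉₊:ℕ):ℝ) + (D:ℝ) ≤ (N:ℝ) := by exact_mod_cast hN
      linarith
    have hDpos : (0:ℝ) < (D:ℝ) := by linarith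
    have hMp : (0:ℝ) ≤ ∏ j ∈ range k, (M+(j:ℝ)) :=
      Finset.prod_nonneg fun j _ => by have : (0:ℝ) ≤ (j:ℝ) := Nat.cast_nonneg j; linarith
    have hDprod : (0:ℝ) < ∏ j ∈ range k, ((D:ℝ)+(j:ℝ)) :=
      Finset.prod_pos fun j _ => by have : (0:ℝ) ≤ (j:ℝ) := Nat.cast_nonneg j; linarith
    have hfacpos : (0:ℝ) < (k.factorial : ℝ) := by exact_mod_cast k.factorial_pos
    rw [hbound_eq k, t, norm_div, norm_mul, norm_mul, Complex.norm_natCast]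
    refine div_le_div₀ (by positivity)
      (mul_le_mul (poch_norm_upper a M hMa k) (poch_norm_upper b M hMb k) (norm_nonneg _) hMp)
      (by positivity) ?_
    refine mul_le_mul le_rfl ?_ (le_of_lt hDprod) (le_of_lt hfacpos)
    refine le_trans ?_ (poch_norm_lower c (by linarith) k)
    refine Finset.prod_le_prod (fun j _ => by
        have : (0:ℝ) ≤ (j:ℝ) := Nat.cast_nonneg j; linarith)
      (fun j _ => by linarith)
  have hmain := tendsto_tsum_of_dominated_convergence hbsum hpt hdom
  have h1 : (∑' k : ℕ, (if k = 0 then (1:ℂ) else 0)) = 1 := tsum_ite_eq 0 1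
  rwa [h1] at hmain

lemma t_zero_of_left {a : ℂ} {m : ℕ} (ha : a = -(m:ℂ)) (b c' : ℂ) {k : ℕ} (hk : m < k) :
    t a b c' k = 0 := by
  rw [t, poch_eval_zero ha hk, zero_mul, zero_div]

lemma t_zero_of_right {b : ℂ} {m : ℕ} (hb : b = -(m:ℂ)) (a c' : ℂ) {k : ℕ} (hk : m < k) :
    t a b c' k = 0 := by
  rw [t, poch_eval_zero hb hk, mul_zero, zero_div]

lemma main_hyps {a b c : ℂ} (hcc : ∀ k : ℕ, c ≠ -(k:ℂ)) (h : 0 < (c - a - b).re) :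
    (∀ j : ℕ, Summable (t a b (c + (j:ℂ)))) ∧
      (∀ j : ℕ, Tendsto (fun k : ℕ => (k:ℂ) * t a b (c + (j:ℂ)) k) atTop (𝓝 0)) := by
  by_cases hA : (∃ m : ℕ, a = -(m:ℂ)) ∨ (∃ m : ℕ, b = -(m:ℂ))
  · have hz : ∃ m : ℕ, ∀ (c' : ℂ) (k : ℕ), m < k → t a b c' k = 0 := by
      rcases hA with ⟨m, hm⟩ | ⟨m, hm⟩
      · exact ⟨m, fun c' k hk => t_zero_of_left hm b c' hk⟩
      · exact ⟨m, fun c' k hk => t_zero_of_right hm a c' hk⟩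
    obtain ⟨m, hm⟩ := hz
    constructor <;> intro j
    · refine summable_of_ne_finset_zero (s := Finset.range (m+1)) fun k hk => ?_
      exact hm _ k (by simpa using hk)
    · refine Tendsto.congr' ?_ tendsto_const_nhds
      filter_upwards [eventually_gt_atTop m] with k hk
      rw [hm _ k hk, mul_zero]
  · push_neg at hA
    obtain ⟨ha, hb⟩ := hA
    exact ⟨fun j => (summable_norm_t ha hb (hcc_shift hcc j) (hre_shift h j)).of_norm,
      fun j => beta_tendsto ha hb (hcc_shift hcc j) (hre_shift h j)⟩

theorem gauss (a b c : ℂ) (hcc : ∀ k : ℕ, c ≠ -(k:ℂ)) (h : 0 < (c - a - b).re) :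
    ∑' k, t a b c k = Complex.Gamma c * Complex.Gamma (c - a - b) /
      (Complex.Gamma (c - a) * Complex.Gamma (c - b)) := by
  obtain ⟨H1, H2⟩ := main_hyps hcc h
  have heq := iterate_step hcc h H1 H2
  have hlim : Tendsto (fun N : ℕ =>
      (∏ j ∈ range N, ((c+(j:ℂ)-a)*(c+(j:ℂ)-b)/((c+(j:ℂ))*(c+(j:ℂ)-a-b)))) *
        ∑' k, t a b (c + (N:ℂ)) k) atTop
      (𝓝 (Complex.Gamma c * Complex.Gamma (c-a-b) /
        (Complex.Gamma (c-a) * Complex.Gamma (c-b)) * 1)) :=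
    (prod_tendsto hcc h).mul (tail_tendsto a b c)
  rw [mul_one] at hlim
  have hconst : Tendsto (fun _ : ℕ => ∑' k, t a b c k) atTop (𝓝 (∑' k, t a b c k)) :=
    tendsto_const_nhds
  refine tendsto_nhds_unique ?_ hlim
  exact hconst.congr (fun N => heq N)

end Gauss

theorem stmt9 (a b c : ℂ) (hc : ∀ k : ℕ, c ≠ -(k : ℂ)) (h : 0 < (c - a - b).re) :
    ∑' k : ℕ, ((ascPochhammer ℂ k).eval a * (ascPochhammer ℂ k).eval b) /
        (k.factorial * (ascPochhammer ℂ k).eval c) =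
      Complex.Gamma c * Complex.Gamma (c - a - b) /
        (Complex.Gamma (c - a) * Complex.Gamma (c - b)) := by
  have := Gauss.gauss a b c hc h
  simpa [Gauss.t] using this
end
end
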